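/- In the linear regression setup, the expected 2-Wasserstein distance between the empirical distribution F_n of the true residuals and the centered empirical distribution F̂_n of the estimated residuals satisfies E[d₂(F_n, F̂_n)] ≤ E[(1/√n) ‖((1/n) 𝟙𝟙ᵀ + Π)^{1/2} ε_n‖₂] ≤ σ √((p+1)/n), where Π = X_n(X_nᵀX_n)⁻¹X_nᵀ. -/

import Mathlib

open MeasureTheory Matrix
open scoped ENNReal NNReal BigOperators

noncomputable section

/-- Euclidean norm on `Fin d → ℝ`. -/
def euclNorm {d : ℕ} (v : Fin d → ℝ) : ℝ := Real.sqrt (∑ i, v i ^ 2)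

/-- `q`-Wasserstein distance between measures on `Fin d → ℝ` (Euclidean norm cost). -/
def wassE (q : ℝ) {d : ℕ} (μ ν : Measure (Fin d → ℝ)) : ℝ :=
  sInf { r : ℝ | ∃ γ : Measure ((Fin d → ℝ) × (Fin d → ℝ)),
    γ.map Prod.fst = μ ∧ γ.map Prod.snd = ν ∧
    r = (∫ z, euclNorm (z.1 - z.2) ^ q ∂γ) ^ (1 / q) }

/-- `q`-Wasserstein distance between measures on `ℝ`. -/
def wassR (q : ℝ) (μ ν : Measure ℝ) : ℝ :=
  sInf { r : ℝ | ∃ γ : Measure (ℝ × ℝ),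
    γ.map Prod.fst = μ ∧ γ.map Prod.snd = ν ∧
    r = (∫ z, |z.1 - z.2| ^ q ∂γ) ^ (1 / q) }

/-- Empirical measure of `k` points. -/
def empMeasure {E : Type*} [MeasurableSpace E] {k : ℕ} (pts : Fin k → E) : Measure E :=
  (k : ℝ≥0∞)⁻¹ • ∑ i, Measure.dirac (pts i)

instance empMeasure.instIsFiniteMeasure {E : Type*} [MeasurableSpace E] {k : ℕ}
    (pts : Fin k → E) : IsFiniteMeasure (empMeasure pts) := by
  constructor
  have h : (∑ i, Measure.dirac (pts i)) Set.univ = (k : ℝ≥0∞) := by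
    simp [Measure.finset_sum_apply]
  rw [empMeasure, Measure.smul_apply, h, smul_eq_mul]
  by_cases hk : k = 0
  · subst hk; simp
  · rw [ENNReal.inv_mul_cancel (by exact_mod_cast hk) (ENNReal.natCast_ne_top k)]
    exact ENNReal.one_lt_top

/-- Spectral norm (operator norm w.r.t. Euclidean norms). -/
def specNorm {m n : ℕ} (A : Matrix (Fin m) (Fin n) ℝ) : ℝ :=
  ‖LinearMap.toContinuousLinearMap (Matrix.toEuclideanLin A)‖

/-- Orlicz (quasi-)norm of order `α` of the identity under a distribution `F` on `ℝ`. -/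
def orlicz (α : ℝ) (F : Measure ℝ) : ℝ :=
  sInf { t : ℝ | 0 < t ∧ ∫ x, Real.exp ((|x| / t) ^ α) ∂F ≤ 2 }

/-- The OLS map `(XᵀX)⁻¹Xᵀ`. -/
def olsM {n p : ℕ} (X : Matrix (Fin n) (Fin p) ℝ) : Matrix (Fin p) (Fin n) ℝ :=
  (Xᵀ * X)⁻¹ * Xᵀ

/-- Center a vector by subtracting the mean of its entries. -/
def center {n : ℕ} (v : Fin n → ℝ) : Fin n → ℝ := fun i => v i - (∑ j, v j) / n

/-- Projection onto the column space of `X`. -/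
def projMat {n p : ℕ} (X : Matrix (Fin n) (Fin p) ℝ) : Matrix (Fin n) (Fin n) ℝ :=
  X * (Xᵀ * X)⁻¹ * Xᵀ

/-- The matrix `(1/n)𝟙𝟙ᵀ + Π`. -/
def covMat {n p : ℕ} (X : Matrix (Fin n) (Fin p) ℝ) : Matrix (Fin n) (Fin n) ℝ :=
  (n : ℝ)⁻¹ • Matrix.of (fun _ _ => (1 : ℝ)) + projMat X

/-- Uniform distribution on `Fin n`. -/
def unifFin (n : ℕ) : Measure (Fin n) := empMeasure (fun i : Fin n => i)

/-- The positive semidefinite square root (Mathlib's removed `Matrix.PosSemidef.sqrt`, old definition). -/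
def Matrix.PosSemidef.sqrt {n : ℕ} {A : Matrix (Fin n) (Fin n) ℝ} (hA : A.PosSemidef) :
    Matrix (Fin n) (Fin n) ℝ :=
  (hA.1.eigenvectorUnitary : Matrix (Fin n) (Fin n) ℝ) *
    Matrix.diagonal (fun i => Real.sqrt (hA.1.eigenvalues i)) *
    (star hA.1.eigenvectorUnitary : Matrix (Fin n) (Fin n) ℝ)

lemma psd_sqrt_isHermitian {n : ℕ} {A : Matrix (Fin n) (Fin n) ℝ} (hA : A.PosSemidef) :
    hA.sqrt.IsHermitian := by
  unfold Matrix.PosSemidef.sqrt Matrix.IsHermitian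
  simp [Matrix.mul_assoc, Matrix.star_eq_conjTranspose]

lemma psd_sqrt_mul_self {n : ℕ} {A : Matrix (Fin n) (Fin n) ℝ} (hA : A.PosSemidef) :
    hA.sqrt * hA.sqrt = A := by
  unfold Matrix.PosSemidef.sqrt
  set U := hA.1.eigenvectorUnitary
  have hU : (star U : Matrix (Fin n) (Fin n) ℝ) * (U : Matrix (Fin n) (Fin n) ℝ) = 1 :=
    Unitary.coe_star_mul_self U
  calc (U : Matrix (Fin n) (Fin n) ℝ) * diagonal (fun i => Real.sqrt (hA.1.eigenvalues i)) *
        (star U : Matrix (Fin n) (Fin n) ℝ) * ((U : Matrix (Fin n) (Fin n) ℝ) *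
        diagonal (fun i => Real.sqrt (hA.1.eigenvalues i)) * (star U : Matrix (Fin n) (Fin n) ℝ))
      = (U : Matrix (Fin n) (Fin n) ℝ) * (diagonal (fun i => Real.sqrt (hA.1.eigenvalues i)) *
        ((star U : Matrix (Fin n) (Fin n) ℝ) * (U : Matrix (Fin n) (Fin n) ℝ)) *
        diagonal (fun i => Real.sqrt (hA.1.eigenvalues i))) * (star U : Matrix (Fin n) (Fin n) ℝ) := by
        simp only [Matrix.mul_assoc]
    _ = A := by
        rw [hU, Matrix.mul_one, Matrix.diagonal_mul_diagonal]
        conv_rhs => rw [hA.1.spectral_theorem, Unitary.conjStarAlgAut_apply]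
        congr 2
        apply congrArg
        funext i
        exact Real.mul_self_sqrt (hA.eigenvalues_nonneg i)


lemma map_empMeasure {E F' : Type*} [MeasurableSpace E] [MeasurableSpace F'] {k : ℕ}
    (pts : Fin k → E) {f : E → F'} (hf : Measurable f) :
    (empMeasure pts).map f = empMeasure (fun i => f (pts i)) := by
  unfold empMeasure
  rw [Measure.map_smul]
  congr 1
  ext s hs
  rw [Measure.map_apply hf hs]
  simp [Measure.finset_sum_apply, Measure.dirac_apply' _ (hf hs), Measure.dirac_apply' _ hs,
    Set.indicator, Set.mem_preimage]
  rfl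

lemma integral_empMeasure {E : Type*} [MeasurableSpace E] [MeasurableSingletonClass E] {k : ℕ}
    (pts : Fin k → E) (f : E → ℝ) :
    ∫ x, f x ∂(empMeasure pts) = (k : ℝ)⁻¹ * ∑ i, f (pts i) := by
  unfold empMeasure
  rw [integral_smul_measure, integral_finset_sum_measure (fun i _ =>
    ((integrable_const (f (pts i))).congr (ae_eq_dirac f).symm))]
  simp [integral_dirac, ENNReal.toReal_inv]

lemma wassR_nonneg (q : ℝ) (μ ν : Measure ℝ) : 0 ≤ wassR q μ ν := by
  apply Real.sInf_nonneg
  rintro r ⟨γ, -, -, rfl⟩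
  exact Real.rpow_nonneg (integral_nonneg fun z => Real.rpow_nonneg (abs_nonneg _) _) _

lemma wassR_emp_le {k : ℕ} (a b : Fin k → ℝ) :
    wassR 2 (empMeasure a) (empMeasure b) ≤ (Real.sqrt k)⁻¹ * euclNorm (a - b) := by
  have hbdd : BddBelow { r : ℝ | ∃ γ : Measure (ℝ × ℝ),
      γ.map Prod.fst = empMeasure a ∧ γ.map Prod.snd = empMeasure b ∧
      r = (∫ z, |z.1 - z.2| ^ (2:ℝ) ∂γ) ^ (1 / (2:ℝ)) } := by
    refine ⟨0, ?_⟩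
    rintro r ⟨γ, -, -, rfl⟩
    exact Real.rpow_nonneg (integral_nonneg fun z => Real.rpow_nonneg (abs_nonneg _) _) _
  have hmem : ((k : ℝ)⁻¹ * ∑ i, (a i - b i) ^ 2) ^ ((1:ℝ) / 2) ∈ { r : ℝ | ∃ γ : Measure (ℝ × ℝ),
      γ.map Prod.fst = empMeasure a ∧ γ.map Prod.snd = empMeasure b ∧
      r = (∫ z, |z.1 - z.2| ^ (2:ℝ) ∂γ) ^ (1 / (2:ℝ)) } := by
    refine ⟨empMeasure (fun i => (a i, b i)), ?_, ?_, ?_⟩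
    · rw [map_empMeasure _ measurable_fst]
    · rw [map_empMeasure _ measurable_snd]
    · rw [integral_empMeasure]
      have h2 : ∀ x : ℝ, |x| ^ (2:ℝ) = x ^ 2 := fun x => by
        rw [show (2:ℝ) = ((2:ℕ):ℝ) by norm_num, Real.rpow_natCast, sq_abs]
      simp_rw [h2]
  have hle := csInf_le hbdd hmem
  refine le_trans hle (le_of_eq ?_)
  rw [← Real.sqrt_eq_rpow, Real.sqrt_mul (by positivity), Real.sqrt_inv]
  rfl


-- invertibility from full rank
lemma isUnit_XtX {n p : ℕ} (X : Matrix (Fin n) (Fin p) ℝ) (hX : X.rank = p) :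
    IsUnit (Xᵀ * X).det := by
  have h1 : (Xᵀ * X).rank = p := by rw [Matrix.rank_transpose_mul_self, hX]
  have hsurj : Function.Surjective (Xᵀ * X).mulVec := by
    have : LinearMap.range (Xᵀ * X).mulVecLin = ⊤ := by
      apply Submodule.eq_top_of_finrank_eq
      rw [← Matrix.rank, h1, Module.finrank_fintype_fun_eq_card, Fintype.card_fin]
    intro v
    obtain ⟨w, hw⟩ := (LinearMap.range_eq_top).mp this v
    exact ⟨w, hw⟩
  exact (Matrix.isUnit_iff_isUnit_det _).mp (Matrix.mulVec_surjective_iff_isUnit.mp hsurj)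

lemma proj_sym {n p : ℕ} (X : Matrix (Fin n) (Fin p) ℝ) (hdet : IsUnit (Xᵀ * X).det) :
    (projMat X)ᵀ = projMat X := by
  unfold projMat
  rw [Matrix.transpose_mul, Matrix.transpose_mul, Matrix.transpose_transpose,
    Matrix.transpose_nonsing_inv, Matrix.transpose_mul, Matrix.transpose_transpose,
    Matrix.mul_assoc]

lemma proj_idem {n p : ℕ} (X : Matrix (Fin n) (Fin p) ℝ) (hdet : IsUnit (Xᵀ * X).det) :
    projMat X * projMat X = projMat X := by
  unfold projMat
  have h : (Xᵀ * X)⁻¹ * (Xᵀ * X) = 1 := Matrix.nonsing_inv_mul _ hdet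
  calc X * (Xᵀ * X)⁻¹ * Xᵀ * (X * (Xᵀ * X)⁻¹ * Xᵀ)
      = X * ((Xᵀ * X)⁻¹ * (Xᵀ * X)) * ((Xᵀ * X)⁻¹ * Xᵀ) := by
        simp only [Matrix.mul_assoc]
    _ = X * (Xᵀ * X)⁻¹ * Xᵀ := by rw [h]; simp [Matrix.mul_assoc]

lemma proj_fix {n p : ℕ} (X : Matrix (Fin n) (Fin p) ℝ) (hdet : IsUnit (Xᵀ * X).det) :
    projMat X * X = X := by
  unfold projMat
  have h : (Xᵀ * X)⁻¹ * (Xᵀ * X) = 1 := Matrix.nonsing_inv_mul _ hdet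
  calc X * (Xᵀ * X)⁻¹ * Xᵀ * X = X * ((Xᵀ * X)⁻¹ * (Xᵀ * X)) := by simp only [Matrix.mul_assoc]
    _ = X := by rw [h, Matrix.mul_one]

-- key pointwise inequality
lemma key_ineq {n p : ℕ} (X : Matrix (Fin n) (Fin p) ℝ) (hdet : IsUnit (Xᵀ * X).det)
    (hPSD : (covMat X).PosSemidef) (β : Fin p → ℝ) (e : Fin n → ℝ) :
    euclNorm (e - center ((X.mulVec β + e) - X.mulVec ((olsM X).mulVec (X.mulVec β + e))))
      ≤ euclNorm (hPSD.sqrt.mulVec e) := by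
  set S := hPSD.sqrt with hSdef
  set Pr := projMat X with hPrdef
  have hrhat : (X.mulVec β + e) - X.mulVec ((olsM X).mulVec (X.mulVec β + e))
      = e - Pr.mulVec e := by
    have h1 : X.mulVec ((olsM X).mulVec (X.mulVec β + e)) = Pr.mulVec (X.mulVec β + e) := by
      rw [Matrix.mulVec_mulVec, hPrdef]
      unfold olsM projMat
      rw [Matrix.mul_assoc]
    rw [h1, Matrix.mulVec_add, Matrix.mulVec_mulVec]
    rw [show Pr * X = X from proj_fix X hdet]
    abel
  rw [hrhat]
  set u := Pr.mulVec e with hudef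
  set s := ∑ i, e i with hsdef
  set t := ∑ i, u i with htdef
  set m := (s - t) / n with hmdef
  have hvec : ∀ i, (e - center (e - u)) i = u i + m := by
    intro i
    simp only [Pi.sub_apply, center, Finset.sum_sub_distrib, ← hsdef, ← htdef]
    rw [hmdef]
    ring
  -- sums
  have hsym : Sᵀ = S := by
    have h := psd_sqrt_isHermitian hPSD
    ext i j
    have := congrFun (congrFun h i) j
    simpa [Matrix.conjTranspose_apply] using this
  have hPrsym : Prᵀ = Pr := proj_sym X hdet
  have hRHS : ∑ i, (S.mulVec e) i ^ 2 = (n:ℝ)⁻¹ * s^2 + ∑ i, u i ^ 2 := by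
    have h1 : ∑ i, (S.mulVec e) i ^ 2 = (S.mulVec e) ⬝ᵥ (S.mulVec e) := by
      simp [dotProduct, sq]
    have hSS : S * S = covMat X := psd_sqrt_mul_self hPSD
    have h2 : (S.mulVec e) ⬝ᵥ (S.mulVec e) = ((covMat X).mulVec e) ⬝ᵥ e := by
      rw [Matrix.dotProduct_mulVec, ← Matrix.mulVec_transpose, hsym,
        Matrix.mulVec_mulVec, hSS]
    have h3 : ((covMat X).mulVec e) ⬝ᵥ e = (n:ℝ)⁻¹ * s^2 + u ⬝ᵥ e := by
      unfold covMat
      rw [Matrix.add_mulVec, add_dotProduct, Matrix.smul_mulVec,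
        smul_dotProduct]
      congr 1
      · have : (Matrix.of (fun _ _ => (1:ℝ)) : Matrix (Fin n) (Fin n) ℝ).mulVec e
            = fun _ => s := by
          funext i
          simp [Matrix.mulVec, dotProduct, hsdef]
        rw [this]
        simp only [dotProduct, ← Finset.mul_sum, ← hsdef, smul_eq_mul]
        ring
    have h4 : u ⬝ᵥ e = ∑ i, u i ^ 2 := by
      have : u ⬝ᵥ u = u ⬝ᵥ e := by
        calc u ⬝ᵥ u = u ⬝ᵥ (Pr.mulVec e) := by rw [hudef]
          _ = (Matrix.vecMul u Pr) ⬝ᵥ e := by rw [Matrix.dotProduct_mulVec]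
          _ = u ⬝ᵥ e := by
              rw [← Matrix.mulVec_transpose, hPrsym, hudef, Matrix.mulVec_mulVec,
                proj_idem X hdet]
      rw [← this]
      simp [dotProduct, sq]
    rw [h1, h2, h3, h4]
  -- the scalar inequality
  unfold euclNorm
  apply Real.sqrt_le_sqrt
  calc ∑ i, ((e - center (e - u)) i) ^ 2 = ∑ i, (u i + m) ^ 2 := by
        exact Finset.sum_congr rfl fun i _ => by rw [hvec i]
    _ = (∑ i, u i ^ 2) + 2 * m * t + n * m ^ 2 := by
        have : ∀ i : Fin n, (u i + m)^2 = u i ^2 + (2 * m) * u i + m^2 := fun i => by ring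
        simp_rw [this]
        rw [Finset.sum_add_distrib, Finset.sum_add_distrib, ← Finset.mul_sum,
          Finset.sum_const, Finset.card_univ, Fintype.card_fin, ← htdef, nsmul_eq_mul]
        try ring
    _ ≤ (n:ℝ)⁻¹ * s^2 + ∑ i, u i ^ 2 := by
        rcases Nat.eq_zero_or_pos n with hn | hn
        · subst hn
          simp [hmdef, htdef, hsdef]
        · have hn' : (0:ℝ) < n := by exact_mod_cast hn
          have key : 2 * m * t + n * m ^ 2 ≤ (n:ℝ)⁻¹ * s ^ 2 := by
            rw [hmdef, inv_mul_eq_div]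
            have heq : 2 * ((s - t) / n) * t + (n:ℝ) * ((s - t) / n) ^ 2
                = (s ^ 2 - t ^ 2) / n := by
              field_simp
              ring
            rw [heq]
            gcongr
            nlinarith [sq_nonneg t]
          linarith
    _ = ∑ i, ((S.mulVec e) i) ^ 2 := by rw [hRHS]


lemma pi_integral_prod (F : Measure ℝ) [IsProbabilityMeasure F] {n : ℕ} (f : Fin n → ℝ → ℝ) :
    ∫ v, ∏ i, f i (v i) ∂(Measure.pi fun _ : Fin n => F) = ∏ i, ∫ x, f i x ∂F :=
  MeasureTheory.integral_fintype_prod_eq_prod (E := fun _ => ℝ) (μ := fun _ => F) f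

lemma pi_integrable_prod (F : Measure ℝ) [IsProbabilityMeasure F] {n : ℕ} (f : Fin n → ℝ → ℝ)
    (hf : ∀ i, Integrable (f i) F) :
    Integrable (fun v : Fin n → ℝ => ∏ i, f i (v i)) (Measure.pi fun _ : Fin n => F) :=
  MeasureTheory.Integrable.fintype_prod_dep (E := fun _ => ℝ) (μ := fun _ => F) hf

lemma moment (F : Measure ℝ) [IsProbabilityMeasure F] {n : ℕ} (σ : ℝ)
    (hint1 : Integrable (fun x : ℝ => x) F) (hint2 : Integrable (fun x : ℝ => x ^ 2) F)
    (hmean : ∫ x, x ∂F = 0) (hvar : ∫ x, x ^ 2 ∂F = σ ^ 2) (j k : Fin n) :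
    Integrable (fun v : Fin n → ℝ => v j * v k) (Measure.pi fun _ : Fin n => F) ∧
      ∫ v, v j * v k ∂(Measure.pi fun _ : Fin n => F) = if j = k then σ ^ 2 else 0 := by
  by_cases hjk : j = k
  · subst hjk
    set f : Fin n → ℝ → ℝ := fun i => if i = j then (fun x => x ^ 2) else (fun _ => 1) with hf
    have hprod : ∀ v : Fin n → ℝ, v j * v j = ∏ i, f i (v i) := by
      intro v
      have hfi : ∀ i, f i (v i) = if i = j then (v i) ^ 2 else 1 := fun i => by
        by_cases h : i = j <;> simp [hf, h]
      simp_rw [hfi]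
      rw [Finset.prod_ite_eq' Finset.univ j (fun i => (v i) ^ 2)]
      simp [sq]
    have hfi : ∀ i, Integrable (f i) F := by
      intro i
      rw [hf]
      by_cases h : i = j <;> simp [h, hint2]
    constructor
    · exact ((pi_integrable_prod F f hfi).congr (Filter.Eventually.of_forall
        (fun v => (hprod v).symm))).congr (Filter.Eventually.of_forall fun v => rfl)
    · rw [if_pos rfl]
      calc ∫ v, v j * v j ∂(Measure.pi fun _ : Fin n => F)
          = ∫ v, ∏ i, f i (v i) ∂(Measure.pi fun _ : Fin n => F) := by
            exact integral_congr_ae (Filter.Eventually.of_forall fun v => hprod v)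
        _ = ∏ i, ∫ x, f i x ∂F := pi_integral_prod F f
        _ = σ ^ 2 := by
            have : ∀ i, ∫ x, f i x ∂F = if i = j then σ ^ 2 else 1 := by
              intro i
              rw [hf]
              by_cases h : i = j <;> simp [h, hvar]
            simp_rw [this]
            simp [Finset.prod_ite_eq']
  · set f : Fin n → ℝ → ℝ := fun i => if i = j then (fun x => x) else if i = k then (fun x => x)
      else (fun _ => 1) with hf
    have hprod : ∀ v : Fin n → ℝ, v j * v k = ∏ i, f i (v i) := by
      intro v
      rw [← Finset.prod_subset (Finset.subset_univ ({j, k} : Finset (Fin n)))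
        (fun i _ hi => ?_)]
      · rw [Finset.prod_pair hjk]
        simp [hf, hjk, Ne.symm hjk]
      · simp only [Finset.mem_insert, Finset.mem_singleton, not_or] at hi
        simp [hf, hi.1, hi.2]
    have hfi : ∀ i, Integrable (f i) F := by
      intro i
      rw [hf]
      by_cases h : i = j
      · simp [h, hint1]
      · by_cases h' : i = k <;> simp [h, h', hint1]
    constructor
    · exact (pi_integrable_prod F f hfi).congr (Filter.Eventually.of_forall
        (fun v => (hprod v).symm))
    · rw [if_neg hjk]
      calc ∫ v, v j * v k ∂(Measure.pi fun _ : Fin n => F)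
          = ∫ v, ∏ i, f i (v i) ∂(Measure.pi fun _ : Fin n => F) :=
            integral_congr_ae (Filter.Eventually.of_forall fun v => hprod v)
        _ = ∏ i, ∫ x, f i x ∂F := pi_integral_prod F f
        _ = 0 := by
            apply Finset.prod_eq_zero (Finset.mem_univ j)
            simp [hf, hmean]

lemma sqsum_integral (F : Measure ℝ) [IsProbabilityMeasure F] {n : ℕ} (σ : ℝ)
    (hint1 : Integrable (fun x : ℝ => x) F) (hint2 : Integrable (fun x : ℝ => x ^ 2) F)
    (hmean : ∫ x, x ∂F = 0) (hvar : ∫ x, x ^ 2 ∂F = σ ^ 2)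
    (A : Matrix (Fin n) (Fin n) ℝ) :
    Integrable (fun v : Fin n → ℝ => ∑ i, (A.mulVec v i) ^ 2) (Measure.pi fun _ : Fin n => F) ∧
      ∫ v, ∑ i, (A.mulVec v i) ^ 2 ∂(Measure.pi fun _ : Fin n => F)
        = σ ^ 2 * ∑ i, ∑ j, (A i j) ^ 2 := by
  have hexp : ∀ (v : Fin n → ℝ) i, (A.mulVec v i) ^ 2
      = ∑ j, ∑ k, (A i j * A i k) * (v j * v k) := by
    intro v i
    simp only [Matrix.mulVec, dotProduct]
    rw [sq, Finset.sum_mul_sum]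
    exact Finset.sum_congr rfl fun j _ => Finset.sum_congr rfl fun k _ => by ring
  have hintjk : ∀ (c : ℝ) (j k : Fin n), Integrable (fun v : Fin n → ℝ => c * (v j * v k))
      (Measure.pi fun _ : Fin n => F) :=
    fun c j k => (moment F σ hint1 hint2 hmean hvar j k).1.const_mul c
  have hint_i : ∀ i : Fin n, Integrable
      (fun v : Fin n → ℝ => ∑ j, ∑ k, (A i j * A i k) * (v j * v k))
      (Measure.pi fun _ : Fin n => F) :=
    fun i => integrable_finset_sum _ fun j _ => integrable_finset_sum _ fun k _ => hintjk _ j k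
  constructor
  · apply Integrable.congr (integrable_finset_sum Finset.univ fun i _ => hint_i i)
    exact Filter.Eventually.of_forall fun v =>
      (Finset.sum_congr rfl fun i (_ : i ∈ Finset.univ) => (hexp v i).symm)
  · calc ∫ v, ∑ i, (A.mulVec v i) ^ 2 ∂(Measure.pi fun _ : Fin n => F)
        = ∫ v, ∑ i, ∑ j, ∑ k, (A i j * A i k) * (v j * v k)
            ∂(Measure.pi fun _ : Fin n => F) := by
          apply integral_congr_ae (Filter.Eventually.of_forall fun v => ?_)
          exact Finset.sum_congr rfl fun i _ => hexp v i
      _ = ∑ i, ∑ j, ∑ k, (A i j * A i k) *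
            ∫ v, v j * v k ∂(Measure.pi fun _ : Fin n => F) := by
          rw [integral_finset_sum _ fun i _ => hint_i i]
          refine Finset.sum_congr rfl fun i _ => ?_
          rw [integral_finset_sum _ fun j _ => integrable_finset_sum _ fun k _ => hintjk _ j k]
          refine Finset.sum_congr rfl fun j _ => ?_
          rw [integral_finset_sum _ fun k _ => hintjk _ j k]
          exact Finset.sum_congr rfl fun k _ => MeasureTheory.integral_const_mul _ _
      _ = σ ^ 2 * ∑ i, ∑ j, (A i j) ^ 2 := by
          simp_rw [(moment F σ hint1 hint2 hmean hvar _ _).2, mul_ite, mul_zero,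
            Finset.sum_ite_eq Finset.univ, Finset.mem_univ, if_true]
          rw [Finset.mul_sum]
          refine Finset.sum_congr rfl fun i _ => ?_
          rw [Finset.mul_sum]
          exact Finset.sum_congr rfl fun j _ => by ring


/-- Lemma 5 of the paper:
`E[d₂(F_n, F̂_n)] ≤ E[(1/√n)‖((1/n)𝟙𝟙ᵀ + Π)^{1/2}ε_n‖₂] ≤ σ√((p+1)/n)`. -/
theorem stmt11 (n p : ℕ) (X : Matrix (Fin n) (Fin p) ℝ) (hX : X.rank = p)
    (hPSD : (covMat X).PosSemidef)
    (Ω : Type*) [MeasurableSpace Ω] (P : Measure Ω) [IsProbabilityMeasure P]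
    (F : Measure ℝ) [IsProbabilityMeasure F] (σ : ℝ) (hσ : 0 ≤ σ)
    (hint1 : Integrable (fun x : ℝ => x) F) (hint2 : Integrable (fun x : ℝ => x ^ 2) F)
    (hmean : ∫ x, x ∂F = 0) (hvar : ∫ x, x ^ 2 ∂F = σ ^ 2)
    (β : Fin p → ℝ) (ε : Ω → Fin n → ℝ)
    (hε : Measure.map ε P = Measure.pi fun _ : Fin n => F) :
    let y : Ω → Fin n → ℝ := fun ω => X.mulVec β + ε ω
    let bhat : Ω → Fin p → ℝ := fun ω => (olsM X).mulVec (y ω)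
    let rhat : Ω → Fin n → ℝ := fun ω => y ω - X.mulVec (bhat ω)
    (∫ ω, wassR 2 (empMeasure (ε ω)) (empMeasure (center (rhat ω))) ∂P
        ≤ ∫ ω, (Real.sqrt n)⁻¹ * euclNorm (hPSD.sqrt.mulVec (ε ω)) ∂P) ∧
      (∫ ω, (Real.sqrt n)⁻¹ * euclNorm (hPSD.sqrt.mulVec (ε ω)) ∂P
        ≤ σ * Real.sqrt ((p + 1) / n)) := by
  intro y bhat rhat
  have hdet : IsUnit (Xᵀ * X).det := isUnit_XtX X hX
  set S := hPSD.sqrt with hSdef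
  -- measurability of ε
  have hεae : AEMeasurable ε P := by
    by_contra h
    rw [Measure.map_of_not_aemeasurable h] at hε
    have h0 := congrArg (fun μ : Measure (Fin n → ℝ) => μ Set.univ) hε
    simp at h0
  set π : Measure (Fin n → ℝ) := Measure.pi fun _ : Fin n => F with hπdef
  have hGc : Continuous fun v : Fin n → ℝ => euclNorm (S.mulVec v) := by
    unfold euclNorm
    apply Real.continuous_sqrt.comp
    apply continuous_finset_sum
    intro i _
    have : Continuous fun v : Fin n → ℝ => S.mulVec v i := by
      simp only [Matrix.mulVec, dotProduct]
      exact continuous_finset_sum _ fun j _ => continuous_const.mul (continuous_apply j)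
    exact this.pow 2
  have hsq := sqsum_integral F σ hint1 hint2 hmean hvar S
  have hG2 : ∀ v : Fin n → ℝ, euclNorm (S.mulVec v) ^ 2 = ∑ i, (S.mulVec v i) ^ 2 :=
    fun v => Real.sq_sqrt (Finset.sum_nonneg fun i _ => sq_nonneg _)
  have hInt2 : Integrable (fun v : Fin n → ℝ => euclNorm (S.mulVec v) ^ 2) π :=
    hsq.1.congr (Filter.Eventually.of_forall fun v => (hG2 v).symm)
  have hmem2 : MemLp (fun v : Fin n → ℝ => euclNorm (S.mulVec v)) 2 π :=
    (memLp_two_iff_integrable_sq hGc.aestronglyMeasurable).mpr hInt2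
  have hGint : Integrable (fun v : Fin n → ℝ => euclNorm (S.mulVec v)) π :=
    hmem2.integrable (by norm_num)
  have hGcomp : Integrable (fun ω => euclNorm (S.mulVec (ε ω))) P := by
    have h1 : Integrable (fun v : Fin n → ℝ => euclNorm (S.mulVec v)) (Measure.map ε P) := by
      rw [hε]; exact hGint
    exact (integrable_map_measure hGc.aestronglyMeasurable hεae).mp h1
  have hmap : ∫ v, euclNorm (S.mulVec v) ∂π = ∫ ω, euclNorm (S.mulVec (ε ω)) ∂P := by
    rw [← hε]
    exact integral_map hεae (by rw [hε]; exact hGc.aestronglyMeasurable)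
  constructor
  · -- first inequality
    apply integral_mono_of_nonneg
    · exact Filter.Eventually.of_forall fun ω => wassR_nonneg _ _ _
    · exact hGcomp.const_mul _
    · apply Filter.Eventually.of_forall
      intro ω
      have h1 := wassR_emp_le (ε ω) (center (rhat ω))
      refine h1.trans ?_
      apply mul_le_mul_of_nonneg_left ?_ (by positivity)
      have h2 := key_ineq X hdet hPSD β (ε ω)
      simp only [rhat, bhat, y]
      exact h2
  · -- second inequality
    rcases Nat.eq_zero_or_pos n with hn | hn
    · subst hn
      have hz : ∀ ω, (Real.sqrt ((0:ℕ):ℝ))⁻¹ * euclNorm (S.mulVec (ε ω)) = 0 := by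
        intro ω; simp
      rw [integral_congr_ae (Filter.Eventually.of_forall hz), integral_zero]
      exact mul_nonneg hσ (Real.sqrt_nonneg _)
    · have hn' : (0:ℝ) < n := by exact_mod_cast hn
      -- Cauchy-Schwarz
      have hGnn : 0 ≤ ∫ v, euclNorm (S.mulVec v) ∂π :=
        integral_nonneg fun v => Real.sqrt_nonneg _
      have hCS : ∫ v, euclNorm (S.mulVec v) ∂π
          ≤ Real.sqrt (∫ v, euclNorm (S.mulVec v) ^ 2 ∂π) := by
        rw [Real.le_sqrt hGnn (integral_nonneg fun v => sq_nonneg _)]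
        have hv := ProbabilityTheory.variance_nonneg
          (fun v : Fin n → ℝ => euclNorm (S.mulVec v)) π
        rw [ProbabilityTheory.variance_eq_sub hmem2] at hv
        have heq : ∫ v, ((fun v : Fin n → ℝ => euclNorm (S.mulVec v)) ^ 2) v ∂π
            = ∫ v, euclNorm (S.mulVec v) ^ 2 ∂π := by
          apply integral_congr_ae (Filter.Eventually.of_forall fun v => ?_)
          simp [Pi.pow_apply]
        rw [heq] at hv
        linarith
      -- the second moment value
      have hsym : ∀ i j, S j i = S i j := by
        intro i j
        have h := psd_sqrt_isHermitian hPSD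
        have := congrFun (congrFun h i) j
        simpa [Matrix.conjTranspose_apply] using this
      have htr : ∑ i, ∑ j, (S i j) ^ 2 = Matrix.trace (covMat X) := by
        conv_rhs => rw [← psd_sqrt_mul_self hPSD]
        simp only [Matrix.trace, Matrix.diag, Matrix.mul_apply]
        exact Finset.sum_congr rfl fun i _ => Finset.sum_congr rfl fun j _ => by
          rw [sq, ← hSdef, hsym i j]
      have htrace : Matrix.trace (covMat X) = 1 + p := by
        unfold covMat
        rw [Matrix.trace_add, Matrix.trace_smul]
        have h1 : Matrix.trace (Matrix.of fun _ _ => (1:ℝ) : Matrix (Fin n) (Fin n) ℝ)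
            = (n : ℝ) := by
          simp [Matrix.trace, Matrix.diag]
        have h2 : Matrix.trace (projMat X) = (p : ℝ) := by
          unfold projMat
          rw [Matrix.trace_mul_comm (X * (Xᵀ * X)⁻¹) Xᵀ, ← Matrix.mul_assoc,
            Matrix.mul_nonsing_inv _ hdet, Matrix.trace_one]
          simp
        rw [h1, h2, smul_eq_mul, inv_mul_cancel₀ (ne_of_gt hn')]
      have hval : ∫ v, euclNorm (S.mulVec v) ^ 2 ∂π = σ ^ 2 * (1 + p) := by
        rw [integral_congr_ae (Filter.Eventually.of_forall fun v => hG2 v), hsq.2, htr, htrace]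
      calc ∫ ω, (Real.sqrt n)⁻¹ * euclNorm (S.mulVec (ε ω)) ∂P
          = (Real.sqrt n)⁻¹ * ∫ v, euclNorm (S.mulVec v) ∂π := by
            rw [MeasureTheory.integral_const_mul, hmap]
        _ ≤ (Real.sqrt n)⁻¹ * Real.sqrt (∫ v, euclNorm (S.mulVec v) ^ 2 ∂π) := by
            apply mul_le_mul_of_nonneg_left hCS (by positivity)
        _ = σ * Real.sqrt ((p + 1) / n) := by
            rw [hval, Real.sqrt_mul (sq_nonneg σ), Real.sqrt_sq hσ,
              Real.sqrt_div (by positivity) (n : ℝ)]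
            rw [show (1 : ℝ) + p = p + 1 by ring]
            field_simp
            try ring
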